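/- Let n ≥ 3 and m ≥ 2. The group Z_n(D_{Z_m}(1)) is isomorphic to the group presented by generators h_1, …, h_{n-1}, b, t, w with defining relations: (R1) h_j h_{j+1} h_j = h_{j+1} h_j h_{j+1} for 1 ≤ j ≤ n−2, h_j h_k = h_k h_j for |j−k| ≥ 2, b h_{n-2} b = h_{n-2} b h_{n-2}, b h_j = h_j b for 1 ≤ j ≤ n−3; (R2) t h_1 t h_1 = h_1 t h_1 t, t h_j = h_j t for 2 ≤ j ≤ n−1, and t b = b t; (R3) ⟨h_{n-1},b⟩_m = ⟨b,h_{n-1}⟩_m; (R4) (h_{n-1} b h_{n-2})^2 = (h_{n-2} h_{n-1} b)^2; (S1) w^m = 1; (C1) w h_j w^{-1} = h_j for 1 ≤ j ≤ n−2 and w t w^{-1} = t; (C2) w h_{n-1} w^{-1} = b and w b w^{-1} = b^{-1} h_{n-1} b. An isomorphism is given by sending h_j ↦ h_j, t ↦ t and u ↦ h_1⋯h_{n-1} w h_{n-1}^{-1}⋯h_1^{-1}. -/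

import Mathlib

namespace Stmt5

/-- `alt x y k` is the alternating product `x y x y ⋯` with `k` factors, starting with `x`. -/
def alt {G : Type*} [Monoid G] (x y : G) : ℕ → G
  | 0 => 1
  | k + 1 => x * alt y x k

/-- Generators of `Z_n(D_{Z_m}(1))`: `Sum.inl i` is `h_{i+1}`, `Sum.inr false` is `t`,
`Sum.inr true` is `u`. -/
abbrev ZGen (n : ℕ) := Fin (n - 1) ⊕ Bool

def zh {n : ℕ} (i : Fin (n - 1)) : FreeGroup (ZGen n) := FreeGroup.of (Sum.inl i)

def zt {n : ℕ} : FreeGroup (ZGen n) := FreeGroup.of (Sum.inr false)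

def zu {n : ℕ} : FreeGroup (ZGen n) := FreeGroup.of (Sum.inr true)

/-- Defining relations of `Z_n(D_{Z_m}(1))`. -/
def zrels (n m : ℕ) : Set (FreeGroup (ZGen n)) :=
  {r | r = zu ^ m
    ∨ (∃ i j : Fin (n - 1), (i : ℕ) + 1 = (j : ℕ) ∧
        r = zh i * zh j * zh i * (zh j * zh i * zh j)⁻¹)
    ∨ (∃ i j : Fin (n - 1), (i : ℕ) + 2 ≤ (j : ℕ) ∧
        r = zh i * zh j * (zh j * zh i)⁻¹)
    ∨ (∃ (v : FreeGroup (ZGen n)) (i : Fin (n - 1)), (v = zt ∨ v = zu) ∧ 1 ≤ (i : ℕ) ∧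
        r = v * zh i * (zh i * v)⁻¹)
    ∨ (∃ (v : FreeGroup (ZGen n)) (i : Fin (n - 1)), (v = zt ∨ v = zu) ∧ (i : ℕ) = 0 ∧
        r = (zh i * v * zh i) * v * (v * (zh i * v * zh i))⁻¹)
    ∨ (∃ i : Fin (n - 1), (i : ℕ) = 0 ∧
        r = zt * ((zh i)⁻¹ * zu * zh i) * (((zh i)⁻¹ * zu * zh i) * zt)⁻¹)}

/-- The orbifold braid group `Z_n(D_{Z_m}(1))`. -/
abbrev Z (n m : ℕ) := PresentedGroup (zrels n m)

/-- Generators of the group `B`: `Sum.inl i` is `h_{i+1}`, `Sum.inr 0` is `b`,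
`Sum.inr 1` is `t`, `Sum.inr 2` is `w`. -/
abbrev BGen (n : ℕ) := Fin (n - 1) ⊕ Fin 3

def bh {n : ℕ} (i : Fin (n - 1)) : FreeGroup (BGen n) := FreeGroup.of (Sum.inl i)

def bb {n : ℕ} : FreeGroup (BGen n) := FreeGroup.of (Sum.inr 0)

def bt {n : ℕ} : FreeGroup (BGen n) := FreeGroup.of (Sum.inr 1)

def bw {n : ℕ} : FreeGroup (BGen n) := FreeGroup.of (Sum.inr 2)

/-- Defining relations (R1)-(R4), (S1), (C1)-(C2) of the group `B`. -/
def brels (n m : ℕ) : Set (FreeGroup (BGen n)) :=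
  {r |
    -- (R1)
      (∃ i j : Fin (n - 1), (i : ℕ) + 1 = (j : ℕ) ∧
        r = bh i * bh j * bh i * (bh j * bh i * bh j)⁻¹)
    ∨ (∃ i j : Fin (n - 1), (i : ℕ) + 2 ≤ (j : ℕ) ∧
        r = bh i * bh j * (bh j * bh i)⁻¹)
    ∨ (∃ i : Fin (n - 1), (i : ℕ) + 3 = n ∧
        r = bb * bh i * bb * (bh i * bb * bh i)⁻¹)
    ∨ (∃ i : Fin (n - 1), (i : ℕ) + 4 ≤ n ∧ r = bb * bh i * (bh i * bb)⁻¹)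
    -- (R2)
    ∨ (∃ i : Fin (n - 1), (i : ℕ) = 0 ∧
        r = bt * bh i * bt * bh i * (bh i * bt * bh i * bt)⁻¹)
    ∨ (∃ i : Fin (n - 1), 1 ≤ (i : ℕ) ∧ r = bt * bh i * (bh i * bt)⁻¹)
    ∨ r = bt * bb * (bb * bt)⁻¹
    -- (R3)
    ∨ (∃ i : Fin (n - 1), (i : ℕ) + 2 = n ∧ r = alt (bh i) bb m * (alt bb (bh i) m)⁻¹)
    -- (R4)
    ∨ (∃ i j : Fin (n - 1), (i : ℕ) + 2 = n ∧ (j : ℕ) + 3 = n ∧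
        r = (bh i * bb * bh j) ^ 2 * ((bh j * bh i * bb) ^ 2)⁻¹)
    -- (S1)
    ∨ r = bw ^ m
    -- (C1)
    ∨ (∃ i : Fin (n - 1), (i : ℕ) + 3 ≤ n ∧ r = bw * bh i * bw⁻¹ * (bh i)⁻¹)
    ∨ r = bw * bt * bw⁻¹ * bt⁻¹
    -- (C2)
    ∨ (∃ i : Fin (n - 1), (i : ℕ) + 2 = n ∧ r = bw * bh i * bw⁻¹ * bb⁻¹)
    ∨ (∃ i : Fin (n - 1), (i : ℕ) + 2 = n ∧ r = bw * bb * bw⁻¹ * (bb⁻¹ * bh i * bb)⁻¹)}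

/-- The group `B` from Statement 5. -/
abbrev B (n m : ℕ) := PresentedGroup (brels n m)

/-- The product `h_1 h_2 ⋯ h_{n-1}` in `B`. -/
def hprodB (n m : ℕ) : B n m :=
  (List.ofFn (fun i : Fin (n - 1) => (PresentedGroup.of (Sum.inl i) : B n m))).prod


section Generic
variable {G : Type*} {H : Type*} [Group G] [Group H]



lemma alt_map (f : G →* H) (x y : G) : ∀ k, f (alt x y k) = alt (f x) (f y) k
  | 0 => by simp [alt]
  | k + 1 => by simp [alt, alt_map f y x k]

lemma mul_pow_swap (x y : G) : ∀ k : ℕ, x * (y * x) ^ k = (x * y) ^ k * x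
  | 0 => by simp
  | k + 1 => by
    rw [pow_succ, ← mul_assoc, mul_pow_swap x y k, pow_succ]
    group

lemma alt_even (x y : G) : ∀ k : ℕ, alt x y (2 * k) = (x * y) ^ k
  | 0 => by simp [alt]
  | k + 1 => by
    have h2 : 2 * (k + 1) = (2 * k) + 1 + 1 := by ring
    rw [h2]
    show x * (y * alt x y (2 * k)) = _
    rw [alt_even x y k, ← mul_assoc, pow_succ']

lemma alt_odd (x y : G) (k : ℕ) : alt x y (2 * k + 1) = (x * y) ^ k * x := by
  show x * alt y x (2 * k) = _
  rw [alt_even, mul_pow_swap]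

lemma alt_conj (g x y : G) : ∀ k, alt (g⁻¹ * x * g) (g⁻¹ * y * g) k = g⁻¹ * alt x y k * g
  | 0 => by simp [alt]
  | k + 1 => by
    show (g⁻¹ * x * g) * alt (g⁻¹ * y * g) (g⁻¹ * x * g) k = g⁻¹ * (x * alt y x k) * g
    rw [alt_conj g y x k]
    group

lemma quasi_conj (x s : G) (hq : x * s * x * s = s * x * s * x) :
    x * (x * s * x⁻¹) * x⁻¹ = (x * s * x⁻¹)⁻¹ * s * (x * s * x⁻¹) := by
  calc x * (x * s * x⁻¹) * x⁻¹
      = (x * s⁻¹ * x⁻¹) * (x * s * x * s) * x⁻¹ * x⁻¹ := by group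
    _ = (x * s⁻¹ * x⁻¹) * (s * x * s * x) * x⁻¹ * x⁻¹ := by rw [hq]
    _ = (x * s * x⁻¹)⁻¹ * s * (x * s * x⁻¹) := by group

lemma conj_quasi (x s : G) (h : x * (x * s * x⁻¹) * x⁻¹ = (x * s * x⁻¹)⁻¹ * s * (x * s * x⁻¹)) :
    x * s * x * s = s * x * s * x := by
  calc x * s * x * s
      = (x * s * x⁻¹) * (x * (x * s * x⁻¹) * x⁻¹) * x * x := by group
    _ = (x * s * x⁻¹) * ((x * s * x⁻¹)⁻¹ * s * (x * s * x⁻¹)) * x * x := by rw [h]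
    _ = s * x * s * x := by group


lemma quasi_r4 (s s2 u : G) (hb : s * s2 * s = s2 * s * s2) (hc : u * s2 = s2 * u)
    (hq : u * s * u * s = s * u * s * u) :
    (s * (u * s * u⁻¹) * s2) ^ 2 = (s2 * s * (u * s * u⁻¹)) ^ 2 := by
  have hic : u⁻¹ * s2 = s2 * u⁻¹ := ((show Commute u s2 from hc).inv_left).eq
  have hAu : (s * u * s) * u = u * (s * u * s) := by
    calc (s * u * s) * u = s * u * s * u := by group
      _ = u * s * u * s := by rw [← hq]
      _ = u * (s * u * s) := by group
  have hAuu : u⁻¹ * (s * u * s) = (s * u * s) * u⁻¹ :=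
    ((show Commute (s * u * s) u from hAu).inv_right).symm.eq
  have key : (s * u * s) * s2 * ((s * u * s) * s2) = s2 * (s * u * s) * (s2 * (s * u * s)) := by
    calc (s * u * s) * s2 * ((s * u * s) * s2)
        = s * u * (s * s2 * s) * u * s * s2 := by group
      _ = s * u * (s2 * s * s2) * u * s * s2 := by rw [hb]
      _ = s * u * s2 * s * (s2 * u) * (s * s2) := by group
      _ = s * u * s2 * s * (u * s2) * (s * s2) := by rw [← hc]
      _ = s * (u * s2) * (s * u) * (s2 * s * s2) := by group
      _ = s * (s2 * u) * (s * u) * (s2 * s * s2) := by rw [hc]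
      _ = s * (s2 * u) * (s * u) * (s * s2 * s) := by rw [← hb]
      _ = s * s2 * (u * s * u * s) * (s2 * s) := by group
      _ = s * s2 * (s * u * s * u) * (s2 * s) := by rw [hq]
      _ = (s * s2 * s) * (u * s * u) * (s2 * s) := by group
      _ = (s2 * s * s2) * (u * s * u) * (s2 * s) := by rw [hb]
      _ = s2 * s * (s2 * u) * s * (u * s2) * s := by group
      _ = s2 * s * (u * s2) * s * (s2 * u) * s := by nth_rw 1 [← hc]; rw [hc]
      _ = s2 * (s * u) * (s2 * s * s2) * (u * s) := by group
      _ = s2 * (s * u) * (s * s2 * s) * (u * s) := by rw [hb]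
      _ = s2 * (s * u * s) * (s2 * (s * u * s)) := by group
  rw [pow_two, pow_two]
  calc s * (u * s * u⁻¹) * s2 * (s * (u * s * u⁻¹) * s2)
      = (s * u * s) * (u⁻¹ * s2) * ((s * u * s) * (u⁻¹ * s2)) := by group
    _ = (s * u * s) * (s2 * u⁻¹) * ((s * u * s) * (s2 * u⁻¹)) := by rw [hic]
    _ = (s * u * s) * s2 * (u⁻¹ * (s * u * s)) * (s2 * u⁻¹) := by group
    _ = (s * u * s) * s2 * ((s * u * s) * u⁻¹) * (s2 * u⁻¹) := by rw [hAuu]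
    _ = (s * u * s) * s2 * (s * u * s) * (u⁻¹ * s2) * u⁻¹ := by group
    _ = (s * u * s) * s2 * (s * u * s) * (s2 * u⁻¹) * u⁻¹ := by rw [hic]
    _ = (s * u * s) * s2 * ((s * u * s) * s2) * (u⁻¹ * u⁻¹) := by group
    _ = s2 * (s * u * s) * (s2 * (s * u * s)) * (u⁻¹ * u⁻¹) := by rw [key]
    _ = s2 * (s * u * s) * s2 * ((s * u * s) * u⁻¹) * u⁻¹ := by group
    _ = s2 * (s * u * s) * s2 * (u⁻¹ * (s * u * s)) * u⁻¹ := by rw [← hAuu]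
    _ = s2 * (s * u * s) * (s2 * u⁻¹) * (s * u * s) * u⁻¹ := by group
    _ = s2 * (s * u * s) * (u⁻¹ * s2) * (s * u * s) * u⁻¹ := by rw [← hic]
    _ = s2 * s * (u * s * u⁻¹) * (s2 * s * (u * s * u⁻¹)) := by group

lemma quasi_alt (s u : G) (m : ℕ) (hq : u * s * u * s = s * u * s * u) (hu : u ^ m = 1) :
    alt s (u * s * u⁻¹) m = alt (u * s * u⁻¹) s m := by
  have hzs : Commute (s * u * s * u) s := by
    unfold Commute SemiconjBy
    calc (s * u * s * u) * s = s * (u * s * u * s) := by group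
      _ = s * (s * u * s * u) := by rw [hq]
  have hzu : Commute (s * u * s * u) u := by
    unfold Commute SemiconjBy
    calc (s * u * s * u) * u = (u * s * u * s) * u := by rw [hq]
      _ = u * (s * u * s * u) := by group
  -- s * c = z * (u⁻¹ * u⁻¹)
  have hsc : s * (u * s * u⁻¹) = (s * u * s * u) * (u⁻¹ * u⁻¹) := by group
  -- c * s = z * (s⁻¹ * (u⁻¹*u⁻¹) * s)
  have hcs : (u * s * u⁻¹) * s = (s * u * s * u) * (s⁻¹ * (u⁻¹ * u⁻¹) * s) := by
    calc (u * s * u⁻¹) * s = (u * s * u * s) * (s⁻¹ * (u⁻¹ * u⁻¹) * s) := by group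
      _ = (s * u * s * u) * (s⁻¹ * (u⁻¹ * u⁻¹) * s) := by rw [hq]
  have huu : Commute (s * u * s * u) (u⁻¹ * u⁻¹) := (hzu.inv_right).mul_right (hzu.inv_right)
  have hconj : Commute (s * u * s * u) (s⁻¹ * (u⁻¹ * u⁻¹) * s) :=
    ((hzs.inv_right.mul_right huu).mul_right hzs)
  have hsck : ∀ k : ℕ, (s * (u * s * u⁻¹)) ^ k = (s * u * s * u) ^ k * (u⁻¹ * u⁻¹) ^ k := by
    intro k; rw [hsc, huu.mul_pow]
  have hcsk : ∀ k : ℕ, ((u * s * u⁻¹) * s) ^ k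
      = (s * u * s * u) ^ k * (s⁻¹ * (u⁻¹ * u⁻¹) ^ k * s) := by
    intro k
    rw [hcs, hconj.mul_pow]
    congr 1
    rw [show s⁻¹ * (u⁻¹ * u⁻¹) * s = s⁻¹ * (u⁻¹ * u⁻¹) * s⁻¹⁻¹ by rw [inv_inv], conj_pow, inv_inv]
  have huuk : ∀ k : ℕ, u ^ (2 * k) = 1 → (u⁻¹ * u⁻¹) ^ k = 1 := by
    intro k h2k
    have : u⁻¹ * u⁻¹ = (u ^ 2)⁻¹ := by group
    rw [this, inv_pow, ← pow_mul, h2k, inv_one]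
  obtain ⟨k, hk⟩ | ⟨k, hk⟩ := Nat.even_or_odd m
  · have hm : m = 2 * k := by omega
    subst hm
    rw [alt_even, alt_even, hsck, hcsk, huuk k hu]
    simp
  · subst hk
    rw [alt_odd, alt_odd, hsck, hcsk]
    have h2k : (u⁻¹ * u⁻¹) ^ k = u := by
      have h1 : u ^ (2 * k) * u = 1 := by rw [← pow_succ, hu]
      have : u⁻¹ * u⁻¹ = (u ^ 2)⁻¹ := by group
      rw [this, inv_pow, ← pow_mul]
      rw [mul_eq_one_iff_eq_inv.mp h1, inv_inv]
    rw [h2k]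
    calc (s * u * s * u) ^ k * u * s
        = (s * u * s * u) ^ k * (s⁻¹ * (s * u * s * u) * u⁻¹) := by group
      _ = (s * u * s * u) ^ k * (s⁻¹ * (u * s * u * s) * u⁻¹) := by rw [← hq]
      _ = (s * u * s * u) ^ k * (s⁻¹ * u * s) * (u * s * u⁻¹) := by group

def pr (x : ℕ → G) (a b : ℕ) : G := ((List.range' a (b - a)).map x).prod

lemma pr_of_le (x : ℕ → G) {a b : ℕ} (h : b ≤ a) : pr x a b = 1 := by
  simp [pr, Nat.sub_eq_zero_of_le h]

lemma pr_cons (x : ℕ → G) {a b : ℕ} (h : a < b) : pr x a b = x a * pr x (a + 1) b := by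
  unfold pr
  rw [show b - a = (b - (a + 1)) + 1 by omega, List.range'_succ]
  simp

lemma pr_append (x : ℕ → G) {a b c : ℕ} (h1 : a ≤ c) (h2 : c ≤ b) :
    pr x a b = pr x a c * pr x c b := by
  unfold pr
  rw [← List.prod_append, ← List.map_append]
  congr 2
  calc List.range' a (b - a) = List.range' a ((b - c) + (c - a)) := by congr 1; omega
    _ = List.range' a (c - a) ++ List.range' (a + 1 * (c - a)) (b - c) :=
        by rw [Nat.add_comm]; exact (List.range'_append (s := a) (m := c - a) (n := b - c) (step := 1)).symm
    _ = List.range' a (c - a) ++ List.range' c (b - c) := by congr 2; omega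

lemma pr_commute (x : ℕ → G) {a b : ℕ} (t : G)
    (hc : ∀ k, a ≤ k → k < b → Commute t (x k)) : Commute t (pr x a b) := by
  apply Commute.list_prod_right
  intro y hy
  simp only [List.mem_map, List.mem_range'_1] at hy
  obtain ⟨k, ⟨hk1, hk2⟩, rfl⟩ := hy
  exact hc k hk1 (by omega)

lemma pr_shift (x : ℕ → G) {a b j : ℕ}
    (Hb : ∀ i, a ≤ i → i + 2 ≤ b → x i * x (i+1) * x i = x (i+1) * x i * x (i+1))
    (Hc : ∀ i k, a ≤ i → i + 2 ≤ k → k < b → x i * x k = x k * x i)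
    (ha : a ≤ j) (hj : j + 2 ≤ b) : pr x a b * x j = x (j + 1) * pr x a b := by
  have com1 : Commute (x j) (pr x (j+2) b) :=
    pr_commute x (x j) (fun k hk1 hk2 => (Hc j k ha hk1 hk2))
  have com2 : Commute (pr x a j) (x (j+1)) :=
    (pr_commute x (x (j+1)) (fun k hk1 hk2 => (Hc k (j+1) hk1 (by omega) (by omega)).symm)).symm
  have hd : pr x a b = pr x a j * (x j * (x (j+1) * pr x (j+2) b)) := by
    rw [pr_append x (show a ≤ j by omega) (show j ≤ b by omega),
      pr_cons x (show j < b by omega), pr_cons x (show j + 1 < b by omega)]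
  rw [hd]
  calc pr x a j * (x j * (x (j+1) * pr x (j+2) b)) * x j
      = pr x a j * (x j * x (j+1)) * (pr x (j+2) b * x j) := by group
    _ = pr x a j * (x j * x (j+1)) * (x j * pr x (j+2) b) := by rw [← com1.eq]
    _ = pr x a j * (x j * x (j+1) * x j) * pr x (j+2) b := by group
    _ = pr x a j * (x (j+1) * x j * x (j+1)) * pr x (j+2) b := by rw [Hb j ha hj]
    _ = (pr x a j * x (j+1)) * (x j * (x (j+1) * pr x (j+2) b)) := by group
    _ = (x (j+1) * pr x a j) * (x j * (x (j+1) * pr x (j+2) b)) := by rw [com2.eq]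
    _ = x (j+1) * (pr x a j * (x j * (x (j+1) * pr x (j+2) b))) := by group

lemma pr_map (x : ℕ → G) (t : G) : ∀ (n : ℕ) {a b : ℕ}, b = a + n →
    (∀ k, a ≤ k → k < b → t * x k = x (k+1) * t) →
    t * pr x a b = pr x (a+1) (b+1) * t
  | 0, a, b, hab, _ => by
    rw [pr_of_le x (by omega), pr_of_le x (by omega)]; group
  | n+1, a, b, hab, hmap => by
    rw [pr_cons x (show a < b by omega), pr_cons x (show a + 1 < b + 1 by omega)]
    calc t * (x a * pr x (a+1) b) = (t * x a) * pr x (a+1) b := by group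
      _ = (x (a+1) * t) * pr x (a+1) b := by rw [hmap a le_rfl (by omega)]
      _ = x (a+1) * (t * pr x (a+1) b) := by group
      _ = x (a+1) * (pr x (a+2) (b+1) * t) := by
            rw [pr_map x t n (by omega) (fun k hk1 hk2 => hmap k (by omega) hk2)]
      _ = x (a+1) * pr x (a+1+1) (b+1) * t := by group

lemma pr_cl (x : ℕ → G) : ∀ (n : ℕ) {a b : ℕ}, b = a + n + 1 →
    (∀ i, a ≤ i → i + 2 ≤ b → x i * x (i+1) * x i = x (i+1) * x i * x (i+1)) →
    (∀ i k, a ≤ i → i + 2 ≤ k → k < b → x i * x k = x k * x i) →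
    pr x (a+1) b * (pr x a b * x (b-1)) = x a * (pr x (a+1) b * pr x a b)
  | 0, a, b, hab, _, _ => by
    have hb1 : b - 1 = a := by omega
    rw [hb1, pr_of_le x (by omega), pr_cons x (show a < b by omega),
      pr_of_le x (show b ≤ a + 1 by omega)]
    group
  | n+1, a, b, hab, Hb, Hc => by
    have IH := pr_cl x n (show b = (a+1) + n + 1 by omega)
      (fun i h1 h2 => Hb i (by omega) h2) (fun i k h1 h2 h3 => Hc i k (by omega) h2 h3)
    have step : pr x (a+1) b * x (b-1)
        = (pr x (a+2) b)⁻¹ * (x (a+1) * (pr x (a+2) b * pr x (a+1) b)) := by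
      rw [← IH]; group
    have com : Commute (x a) (pr x (a+2) b) :=
      pr_commute x (x a) (fun k hk1 hk2 => Hc a k le_rfl (by omega) (by omega))
    have cominv : x a * (pr x (a+2) b)⁻¹ = (pr x (a+2) b)⁻¹ * x a := com.inv_right.eq
    have hsplit : pr x (a+1) b = x (a+1) * pr x (a+2) b := pr_cons x (by omega)
    have hP : pr x (a+1) b * (pr x (a+2) b)⁻¹ = x (a+1) := by rw [hsplit]; group
    rw [pr_cons x (show a < b by omega)]
    calc pr x (a+1) b * (x a * pr x (a+1) b * x (b-1))
        = pr x (a+1) b * x a * (pr x (a+1) b * x (b-1)) := by group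
      _ = pr x (a+1) b * x a * ((pr x (a+2) b)⁻¹ * (x (a+1) * (pr x (a+2) b * pr x (a+1) b)))
            := by rw [step]
      _ = pr x (a+1) b * (x a * (pr x (a+2) b)⁻¹) * x (a+1) * pr x (a+2) b * pr x (a+1) b
            := by group
      _ = pr x (a+1) b * ((pr x (a+2) b)⁻¹ * x a) * x (a+1) * pr x (a+2) b * pr x (a+1) b
            := by rw [cominv]
      _ = (pr x (a+1) b * (pr x (a+2) b)⁻¹) * (x a * x (a+1)) * pr x (a+2) b * pr x (a+1) b
            := by group
      _ = x (a+1) * (x a * x (a+1)) * pr x (a+2) b * pr x (a+1) b := by rw [hP]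
      _ = x (a+1) * x a * x (a+1) * pr x (a+2) b * pr x (a+1) b := by group
      _ = x a * x (a+1) * x a * pr x (a+2) b * pr x (a+1) b := by
            rw [Hb a le_rfl (by omega)]
      _ = x a * x (a+1) * (x a * pr x (a+2) b) * pr x (a+1) b := by group
      _ = x a * x (a+1) * (pr x (a+2) b * x a) * pr x (a+1) b := by rw [com.eq]
      _ = x a * ((x (a+1) * pr x (a+2) b) * (x a * pr x (a+1) b)) := by group
      _ = x a * (pr x (a+1) b * (x a * pr x (a+1) b)) := by rw [← hsplit]

lemma ofFn_prod (x : ℕ → G) : ∀ (N : ℕ) (a : ℕ),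
    (List.ofFn fun i : Fin N => x (a + (i : ℕ))).prod = pr x a (a + N)
  | 0, a => by simp [pr_of_le x (le_refl a)]
  | N+1, a => by
    rw [List.ofFn_succ, List.prod_cons]
    have h1 : (List.ofFn fun i : Fin N => x (a + ((i.succ : Fin (N+1)) : ℕ))).prod
        = (List.ofFn fun i : Fin N => x ((a+1) + (i : ℕ))).prod := by
      have e : (fun i : Fin N => x (a + ((i.succ : Fin (N+1)) : ℕ)))
          = fun i : Fin N => x ((a+1) + (i : ℕ)) := by
        funext i
        congr 1
        simp only [Fin.val_succ]
        omega
      rw [e]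
    rw [h1, ofFn_prod x N (a+1), pr_cons x (show a < a + (N+1) by omega)]
    congr 2
    omega

lemma map_pr (f : G →* H) (x : ℕ → G) (a b : ℕ) :
    f (pr x a b) = pr (fun k => f (x k)) a b := by
  unfold pr
  rw [map_list_prod, List.map_map]
  rfl

end Generic

section ZSide
variable (n m : ℕ)

lemma relZ {r : FreeGroup (ZGen n)} (h : r ∈ zrels n m) : PresentedGroup.mk (zrels n m) r = 1 :=
  (QuotientGroup.eq_one_iff r).mpr (Subgroup.subset_normalClosure h)

def sZ (j : ℕ) : Z n m :=
  if h : 1 ≤ j ∧ j ≤ n - 1 then PresentedGroup.of (Sum.inl ⟨j - 1, by omega⟩) else 1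

def TZ : Z n m := PresentedGroup.of (Sum.inr false)
def UZ : Z n m := PresentedGroup.of (Sum.inr true)

lemma sZ_of (i : Fin (n - 1)) : sZ n m ((i : ℕ) + 1) = PresentedGroup.of (Sum.inl i) := by
  have h : 1 ≤ (i : ℕ) + 1 ∧ (i : ℕ) + 1 ≤ n - 1 := ⟨by omega, by omega⟩
  simp only [sZ, dif_pos h, Nat.add_sub_cancel, Fin.eta]

lemma sZ_out {j : ℕ} (h : ¬(1 ≤ j ∧ j ≤ n - 1)) : sZ n m j = 1 := by
  simp only [sZ, dif_neg h]

lemma mk_zh (i : Fin (n - 1)) :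
    PresentedGroup.mk (zrels n m) (zh i) = sZ n m ((i : ℕ) + 1) := (sZ_of n m i).symm

lemma mk_zt : PresentedGroup.mk (zrels n m) zt = TZ n m := rfl
lemma mk_zu : PresentedGroup.mk (zrels n m) zu = UZ n m := rfl

lemma z_um : UZ n m ^ m = 1 := by
  have h := relZ n m (show zu ^ m ∈ zrels n m from Or.inl rfl)
  rwa [map_pow, mk_zu] at h

lemma z_braid {j : ℕ} (h1 : 1 ≤ j) (h2 : j + 2 ≤ n) :
    sZ n m j * sZ n m (j+1) * sZ n m j = sZ n m (j+1) * sZ n m j * sZ n m (j+1) := by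
  have hi : j - 1 < n - 1 := by omega
  have hj : j < n - 1 := by omega
  have h := relZ n m (show zh ⟨j-1, hi⟩ * zh ⟨j, hj⟩ * zh ⟨j-1, hi⟩ *
      (zh ⟨j, hj⟩ * zh ⟨j-1, hi⟩ * zh ⟨j, hj⟩)⁻¹ ∈ zrels n m from
    Or.inr (Or.inl ⟨⟨j-1, hi⟩, ⟨j, hj⟩, by simp; omega, rfl⟩))
  simp only [map_mul, map_inv, mk_zh] at h
  rw [mul_inv_eq_one] at h
  have e : j - 1 + 1 = j := by omega
  simp only [e] at h
  exact h

lemma z_comm {j k : ℕ} (h1 : j + 2 ≤ k) (h2 : k ≤ n - 1) :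
    sZ n m j * sZ n m k = sZ n m k * sZ n m j := by
  rcases Nat.eq_zero_or_pos j with hj0 | hj0
  · subst hj0; rw [sZ_out n m (by omega)]; group
  have hi : j - 1 < n - 1 := by omega
  have hk : k - 1 < n - 1 := by omega
  have h := relZ n m (show zh ⟨j-1, hi⟩ * zh ⟨k-1, hk⟩ * (zh ⟨k-1, hk⟩ * zh ⟨j-1, hi⟩)⁻¹ ∈
      zrels n m from Or.inr (Or.inr (Or.inl ⟨⟨j-1, hi⟩, ⟨k-1, hk⟩, by simp; omega, rfl⟩)))
  simp only [map_mul, map_inv, mk_zh] at h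
  rw [mul_inv_eq_one] at h
  have e1 : j - 1 + 1 = j := by omega
  have e2 : k - 1 + 1 = k := by omega
  simp only [e1, e2] at h
  exact h

lemma z_vcomm {j : ℕ} (v : Z n m) (hv : v = TZ n m ∨ v = UZ n m) (h1 : 2 ≤ j) :
    v * sZ n m j = sZ n m j * v := by
  by_cases hj : j ≤ n - 1
  swap
  · rw [sZ_out n m (by omega)]; group
  have hi : j - 1 < n - 1 := by omega
  have e : j - 1 + 1 = j := by omega
  rcases hv with rfl | rfl
  · have h := relZ n m (show zt * zh ⟨j-1, hi⟩ * (zh ⟨j-1, hi⟩ * zt)⁻¹ ∈ zrels n m from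
      Or.inr (Or.inr (Or.inr (Or.inl ⟨zt, ⟨j-1, hi⟩, Or.inl rfl, by simp; omega, rfl⟩))))
    simp only [map_mul, map_inv, mk_zh, mk_zt] at h
    rw [mul_inv_eq_one] at h
    simp only [e] at h
    exact h
  · have h := relZ n m (show zu * zh ⟨j-1, hi⟩ * (zh ⟨j-1, hi⟩ * zu)⁻¹ ∈ zrels n m from
      Or.inr (Or.inr (Or.inr (Or.inl ⟨zu, ⟨j-1, hi⟩, Or.inr rfl, by simp; omega, rfl⟩))))
    simp only [map_mul, map_inv, mk_zh, mk_zu] at h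
    rw [mul_inv_eq_one] at h
    simp only [e] at h
    exact h

lemma z_quasi (hn : 3 ≤ n) (v : Z n m) (hv : v = TZ n m ∨ v = UZ n m) :
    v * sZ n m 1 * v * sZ n m 1 = sZ n m 1 * v * sZ n m 1 * v := by
  have hi : (0 : ℕ) < n - 1 := by omega
  have key : ∀ w : FreeGroup (ZGen n), w = zt ∨ w = zu →
      sZ n m 1 * PresentedGroup.mk (zrels n m) w * sZ n m 1 * PresentedGroup.mk (zrels n m) w
      = PresentedGroup.mk (zrels n m) w * (sZ n m 1 * PresentedGroup.mk (zrels n m) w * sZ n m 1)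
      := by
    intro w hw
    have h := relZ n m (show (zh ⟨0, hi⟩ * w * zh ⟨0, hi⟩) * w *
        (w * (zh ⟨0, hi⟩ * w * zh ⟨0, hi⟩))⁻¹ ∈ zrels n m from
      Or.inr (Or.inr (Or.inr (Or.inr (Or.inl ⟨w, ⟨0, hi⟩, hw, by simp, rfl⟩)))))
    simp only [map_mul, map_inv, mk_zh] at h
    rw [mul_inv_eq_one] at h
    simpa using h
  rcases hv with rfl | rfl
  · have h := key zt (Or.inl rfl)
    rw [mk_zt] at h
    calc TZ n m * sZ n m 1 * TZ n m * sZ n m 1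
        = TZ n m * (sZ n m 1 * TZ n m * sZ n m 1) := by group
      _ = sZ n m 1 * TZ n m * sZ n m 1 * TZ n m := by rw [← h]
  · have h := key zu (Or.inr rfl)
    rw [mk_zu] at h
    calc UZ n m * sZ n m 1 * UZ n m * sZ n m 1
        = UZ n m * (sZ n m 1 * UZ n m * sZ n m 1) := by group
      _ = sZ n m 1 * UZ n m * sZ n m 1 * UZ n m := by rw [← h]

lemma z_tu (hn : 3 ≤ n) :
    TZ n m * ((sZ n m 1)⁻¹ * UZ n m * sZ n m 1)
      = ((sZ n m 1)⁻¹ * UZ n m * sZ n m 1) * TZ n m := by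
  have hi : (0 : ℕ) < n - 1 := by omega
  have h := relZ n m (show zt * ((zh ⟨0, hi⟩)⁻¹ * zu * zh ⟨0, hi⟩) *
      (((zh ⟨0, hi⟩)⁻¹ * zu * zh ⟨0, hi⟩) * zt)⁻¹ ∈ zrels n m from
    Or.inr (Or.inr (Or.inr (Or.inr (Or.inr ⟨⟨0, hi⟩, by simp, rfl⟩)))))
  simp only [map_mul, map_inv, mk_zh, mk_zt, mk_zu] at h
  rw [mul_inv_eq_one] at h
  simpa using h


lemma z_hq (hn : 3 ≤ n) :
    UZ n m * sZ n m 1 * UZ n m * sZ n m 1 = sZ n m 1 * UZ n m * sZ n m 1 * UZ n m := by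
  have h := z_quasi n m hn (UZ n m) (Or.inr rfl)
  calc UZ n m * sZ n m 1 * UZ n m * sZ n m 1
      = UZ n m * sZ n m 1 * UZ n m * sZ n m 1 := rfl
    _ = sZ n m 1 * UZ n m * sZ n m 1 * UZ n m := by rw [h]

def HZ : Z n m := pr (sZ n m) 1 n
def KZ : Z n m := pr (sZ n m) 2 n
def NZ : Z n m := pr (sZ n m) 3 n
def GZ : Z n m := KZ n m * HZ n m
def wZ : Z n m := (HZ n m)⁻¹ * (UZ n m * HZ n m)
def bZ : Z n m := wZ n m * sZ n m (n - 1) * (wZ n m)⁻¹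

lemma zHb : ∀ i, 1 ≤ i → i + 2 ≤ n →
    sZ n m i * sZ n m (i+1) * sZ n m i = sZ n m (i+1) * sZ n m i * sZ n m (i+1) :=
  fun _ h1 h2 => z_braid n m h1 h2

lemma zHc {a : ℕ} : ∀ i k, a ≤ i → i + 2 ≤ k → k < n →
    sZ n m i * sZ n m k = sZ n m k * sZ n m i :=
  fun _ k _ h2 h3 => z_comm n m h2 (by omega)

lemma z_ucomm_pr {a b : ℕ} (ha : 2 ≤ a) : Commute (UZ n m) (pr (sZ n m) a b) :=
  pr_commute _ _ (fun k hk1 _ => z_vcomm n m _ (Or.inr rfl) (by omega))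

lemma z_tcomm_pr {a b : ℕ} (ha : 2 ≤ a) : Commute (TZ n m) (pr (sZ n m) a b) :=
  pr_commute _ _ (fun k hk1 _ => z_vcomm n m _ (Or.inl rfl) (by omega))

lemma z_s1N : Commute (sZ n m 1) (pr (sZ n m) 3 n) :=
  pr_commute _ _ (fun k hk1 _ => by
    by_cases hk : k ≤ n - 1
    · exact z_comm n m (by omega) hk
    · rw [sZ_out n m (j := k) (by omega)]; exact (Commute.one_right (sZ n m 1)))

lemma zshift {j : ℕ} (h1 : 1 ≤ j) (h2 : j + 2 ≤ n) :
    HZ n m * sZ n m j = sZ n m (j+1) * HZ n m := by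
  simp only [HZ]
  exact pr_shift (sZ n m) (fun i hi1 hi2 => z_braid n m hi1 hi2)
    (fun i k hi1 hi2 hi3 => z_comm n m hi2 (by omega)) h1 h2

lemma zCL1 (hn : 3 ≤ n) :
    KZ n m * (HZ n m * sZ n m (n-1)) = sZ n m 1 * (KZ n m * HZ n m) := by
  simp only [HZ, KZ]
  have h := pr_cl (sZ n m) (n-2) (show n = 1 + (n-2) + 1 by omega)
    (fun i hi1 hi2 => z_braid n m hi1 hi2)
    (fun i k hi1 hi2 hi3 => z_comm n m hi2 (by omega))
  simpa using h

lemma zCL2 (hn : 3 ≤ n) :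
    NZ n m * (KZ n m * sZ n m (n-1)) = sZ n m 2 * (NZ n m * KZ n m) := by
  simp only [NZ, KZ]
  have h := pr_cl (sZ n m) (n-3) (show n = 2 + (n-3) + 1 by omega)
    (fun i hi1 hi2 => z_braid n m (by omega) hi2)
    (fun i k hi1 hi2 hi3 => z_comm n m hi2 (by omega))
  simpa using h

lemma gS (hn : 3 ≤ n) : GZ n m * sZ n m (n-1) * (GZ n m)⁻¹ = sZ n m 1 := by
  simp only [GZ]
  calc KZ n m * HZ n m * sZ n m (n-1) * (KZ n m * HZ n m)⁻¹
      = KZ n m * (HZ n m * sZ n m (n-1)) * (KZ n m * HZ n m)⁻¹ := by group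
    _ = sZ n m 1 * (KZ n m * HZ n m) * (KZ n m * HZ n m)⁻¹ := by rw [zCL1 n m hn]
    _ = sZ n m 1 := by group

lemma gW (hn : 3 ≤ n) : GZ n m * wZ n m * (GZ n m)⁻¹ = UZ n m := by
  simp only [GZ, wZ, KZ]
  have cu : UZ n m * pr (sZ n m) 2 n = pr (sZ n m) 2 n * UZ n m :=
    (z_ucomm_pr n m (le_refl 2)).eq
  calc pr (sZ n m) 2 n * HZ n m * ((HZ n m)⁻¹ * (UZ n m * HZ n m)) *
        (pr (sZ n m) 2 n * HZ n m)⁻¹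
      = pr (sZ n m) 2 n * UZ n m * (pr (sZ n m) 2 n)⁻¹ := by group
    _ = UZ n m * pr (sZ n m) 2 n * (pr (sZ n m) 2 n)⁻¹ := by rw [← cu]
    _ = UZ n m := by group

lemma gB (hn : 3 ≤ n) :
    GZ n m * bZ n m * (GZ n m)⁻¹ = UZ n m * sZ n m 1 * (UZ n m)⁻¹ := by
  have h1 := gW n m hn
  have h2 := gS n m hn
  calc GZ n m * bZ n m * (GZ n m)⁻¹
      = (GZ n m * wZ n m * (GZ n m)⁻¹) * (GZ n m * sZ n m (n-1) * (GZ n m)⁻¹) *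
        (GZ n m * wZ n m * (GZ n m)⁻¹)⁻¹ := by simp only [bZ]; group
    _ = UZ n m * sZ n m 1 * (UZ n m)⁻¹ := by rw [h1, h2]

lemma gN (hn : 3 ≤ n) :
    GZ n m * sZ n m (n-2) * (GZ n m)⁻¹ = (NZ n m)⁻¹ * (sZ n m 2 * NZ n m) := by
  have hsh := zshift n m (show 1 ≤ n-2 by omega) (show (n-2) + 2 ≤ n by omega)
  have e : n - 2 + 1 = n - 1 := by omega
  rw [e] at hsh
  calc GZ n m * sZ n m (n-2) * (GZ n m)⁻¹
      = KZ n m * (HZ n m * sZ n m (n-2)) * (HZ n m)⁻¹ * (KZ n m)⁻¹ := by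
        simp only [GZ]; group
    _ = KZ n m * (sZ n m (n-1) * HZ n m) * (HZ n m)⁻¹ * (KZ n m)⁻¹ := by rw [hsh]
    _ = (NZ n m)⁻¹ * (NZ n m * (KZ n m * sZ n m (n-1))) * (KZ n m)⁻¹ := by group
    _ = (NZ n m)⁻¹ * (sZ n m 2 * (NZ n m * KZ n m)) * (KZ n m)⁻¹ := by rw [zCL2 n m hn]
    _ = (NZ n m)⁻¹ * (sZ n m 2 * NZ n m) := by group

lemma z_eW (hn : 3 ≤ n) : wZ n m = (GZ n m)⁻¹ * UZ n m * GZ n m := by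
  rw [← gW n m hn]; group

lemma z_eS (hn : 3 ≤ n) : sZ n m (n-1) = (GZ n m)⁻¹ * sZ n m 1 * GZ n m := by
  rw [← gS n m hn]; group

lemma z_eB (hn : 3 ≤ n) : bZ n m = (GZ n m)⁻¹ * (UZ n m * sZ n m 1 * (UZ n m)⁻¹) * GZ n m := by
  rw [← gB n m hn]; group

lemma z_eN (hn : 3 ≤ n) :
    sZ n m (n-2) = (GZ n m)⁻¹ * ((NZ n m)⁻¹ * (sZ n m 2 * NZ n m)) * GZ n m := by
  rw [← gN n m hn]; group

lemma z_wcomm (hn : 3 ≤ n) {j : ℕ} (h1 : 1 ≤ j) (h2 : j + 2 ≤ n) :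
    wZ n m * sZ n m j = sZ n m j * wZ n m := by
  have hu : UZ n m * sZ n m (j+1) = sZ n m (j+1) * UZ n m :=
    z_vcomm n m _ (Or.inr rfl) (by omega)
  simp only [wZ]
  calc (HZ n m)⁻¹ * (UZ n m * HZ n m) * sZ n m j
      = (HZ n m)⁻¹ * UZ n m * (HZ n m * sZ n m j) := by group
    _ = (HZ n m)⁻¹ * UZ n m * (sZ n m (j+1) * HZ n m) := by rw [zshift n m h1 h2]
    _ = (HZ n m)⁻¹ * (UZ n m * sZ n m (j+1)) * HZ n m := by group
    _ = (HZ n m)⁻¹ * (sZ n m (j+1) * UZ n m) * HZ n m := by rw [hu]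
    _ = (HZ n m)⁻¹ * (sZ n m (j+1) * HZ n m) * ((HZ n m)⁻¹ * (UZ n m * HZ n m)) := by group
    _ = (HZ n m)⁻¹ * (HZ n m * sZ n m j) * ((HZ n m)⁻¹ * (UZ n m * HZ n m)) := by
        rw [zshift n m h1 h2]
    _ = sZ n m j * ((HZ n m)⁻¹ * (UZ n m * HZ n m)) := by group

lemma z_wdecomp (hn : 3 ≤ n) :
    wZ n m = (KZ n m)⁻¹ * ((sZ n m 1)⁻¹ * UZ n m * sZ n m 1) * KZ n m := by
  have hH : HZ n m = sZ n m 1 * KZ n m := by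
    simp only [HZ, KZ]; exact pr_cons (sZ n m) (by omega)
  simp only [wZ]
  rw [hH]; group

lemma z_wT (hn : 3 ≤ n) : TZ n m * wZ n m = wZ n m * TZ n m := by
  have c1 : TZ n m * KZ n m = KZ n m * TZ n m := (z_tcomm_pr n m (le_refl 2)).eq
  have c1i : TZ n m * (KZ n m)⁻¹ = (KZ n m)⁻¹ * TZ n m :=
    ((z_tcomm_pr n m (le_refl 2) (a := 2) (b := n)).inv_right).eq
  have c2 := z_tu n m hn
  rw [z_wdecomp n m hn]
  calc TZ n m * ((KZ n m)⁻¹ * ((sZ n m 1)⁻¹ * UZ n m * sZ n m 1) * KZ n m)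
      = (TZ n m * (KZ n m)⁻¹) * ((sZ n m 1)⁻¹ * UZ n m * sZ n m 1) * KZ n m := by group
    _ = ((KZ n m)⁻¹ * TZ n m) * ((sZ n m 1)⁻¹ * UZ n m * sZ n m 1) * KZ n m := by rw [c1i]
    _ = (KZ n m)⁻¹ * (TZ n m * ((sZ n m 1)⁻¹ * UZ n m * sZ n m 1)) * KZ n m := by group
    _ = (KZ n m)⁻¹ * (((sZ n m 1)⁻¹ * UZ n m * sZ n m 1) * TZ n m) * KZ n m := by rw [c2]
    _ = (KZ n m)⁻¹ * ((sZ n m 1)⁻¹ * UZ n m * sZ n m 1) * (TZ n m * KZ n m) := by group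
    _ = (KZ n m)⁻¹ * ((sZ n m 1)⁻¹ * UZ n m * sZ n m 1) * (KZ n m * TZ n m) := by rw [c1]
    _ = (KZ n m)⁻¹ * ((sZ n m 1)⁻¹ * UZ n m * sZ n m 1) * KZ n m * TZ n m := by group

lemma z_wm (hn : 3 ≤ n) : wZ n m ^ m = 1 := by
  have : wZ n m = (HZ n m)⁻¹ * UZ n m * ((HZ n m)⁻¹)⁻¹ := by simp only [wZ]; group
  rw [this, conj_pow, z_um, mul_one, inv_inv, inv_mul_cancel]

lemma z_wquasi (hn : 3 ≤ n) :
    wZ n m * sZ n m (n-1) * wZ n m * sZ n m (n-1)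
      = sZ n m (n-1) * wZ n m * sZ n m (n-1) * wZ n m := by
  rw [z_eW n m hn, z_eS n m hn]
  calc (GZ n m)⁻¹ * UZ n m * GZ n m * ((GZ n m)⁻¹ * sZ n m 1 * GZ n m) *
        ((GZ n m)⁻¹ * UZ n m * GZ n m) * ((GZ n m)⁻¹ * sZ n m 1 * GZ n m)
      = (GZ n m)⁻¹ * (UZ n m * sZ n m 1 * UZ n m * sZ n m 1) * GZ n m := by group
    _ = (GZ n m)⁻¹ * (sZ n m 1 * UZ n m * sZ n m 1 * UZ n m) * GZ n m := by rw [z_hq n m hn]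
    _ = (GZ n m)⁻¹ * sZ n m 1 * GZ n m * ((GZ n m)⁻¹ * UZ n m * GZ n m) *
        ((GZ n m)⁻¹ * sZ n m 1 * GZ n m) * ((GZ n m)⁻¹ * UZ n m * GZ n m) := by group

lemma z_bs (hn : 3 ≤ n) :
    bZ n m * sZ n m (n-2) * bZ n m = sZ n m (n-2) * bZ n m * sZ n m (n-2) := by
  have hw : wZ n m * sZ n m (n-2) = sZ n m (n-2) * wZ n m :=
    z_wcomm n m hn (by omega) (by omega)
  have hw' : (wZ n m)⁻¹ * sZ n m (n-2) * wZ n m = sZ n m (n-2) := by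
    rw [mul_assoc, ← hw]; group
  have hwi : sZ n m (n-2) * (wZ n m)⁻¹ = (wZ n m)⁻¹ * sZ n m (n-2) :=
    ((show Commute (wZ n m) (sZ n m (n-2)) from hw).inv_left.symm).eq
  have hb := z_braid n m (j := n-2) (by omega) (by omega)
  rw [show n-2+1 = n-1 from by omega] at hb
  simp only [bZ]
  calc wZ n m * sZ n m (n-1) * (wZ n m)⁻¹ * sZ n m (n-2) *
        (wZ n m * sZ n m (n-1) * (wZ n m)⁻¹)
      = wZ n m * sZ n m (n-1) * ((wZ n m)⁻¹ * sZ n m (n-2) * wZ n m) * sZ n m (n-1) *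
        (wZ n m)⁻¹ := by group
    _ = wZ n m * sZ n m (n-1) * sZ n m (n-2) * sZ n m (n-1) * (wZ n m)⁻¹ := by rw [hw']
    _ = wZ n m * (sZ n m (n-1) * sZ n m (n-2) * sZ n m (n-1)) * (wZ n m)⁻¹ := by group
    _ = wZ n m * (sZ n m (n-2) * sZ n m (n-1) * sZ n m (n-2)) * (wZ n m)⁻¹ := by rw [← hb]
    _ = (wZ n m * sZ n m (n-2)) * sZ n m (n-1) * (sZ n m (n-2) * (wZ n m)⁻¹) := by group
    _ = (sZ n m (n-2) * wZ n m) * sZ n m (n-1) * (sZ n m (n-2) * (wZ n m)⁻¹) := by rw [hw]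
    _ = sZ n m (n-2) * wZ n m * sZ n m (n-1) * ((wZ n m)⁻¹ * sZ n m (n-2)) := by rw [hwi]
    _ = sZ n m (n-2) * (wZ n m * sZ n m (n-1) * (wZ n m)⁻¹) * sZ n m (n-2) := by group

lemma z_bcomm (hn : 3 ≤ n) {j : ℕ} (h1 : 1 ≤ j) (h2 : j + 3 ≤ n) :
    bZ n m * sZ n m j = sZ n m j * bZ n m := by
  have hw : wZ n m * sZ n m j = sZ n m j * wZ n m := z_wcomm n m hn h1 (by omega)
  have hw' : (wZ n m)⁻¹ * sZ n m j * wZ n m = sZ n m j := by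
    rw [mul_assoc, ← hw]; group
  have hc : sZ n m j * sZ n m (n-1) = sZ n m (n-1) * sZ n m j :=
    z_comm n m (by omega) (le_refl (n-1))
  simp only [bZ]
  calc wZ n m * sZ n m (n-1) * (wZ n m)⁻¹ * sZ n m j
      = wZ n m * sZ n m (n-1) * ((wZ n m)⁻¹ * sZ n m j * wZ n m) * (wZ n m)⁻¹ := by group
    _ = wZ n m * sZ n m (n-1) * sZ n m j * (wZ n m)⁻¹ := by rw [hw']
    _ = wZ n m * (sZ n m (n-1) * sZ n m j) * (wZ n m)⁻¹ := by group
    _ = wZ n m * (sZ n m j * sZ n m (n-1)) * (wZ n m)⁻¹ := by rw [← hc]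
    _ = (wZ n m * sZ n m j) * sZ n m (n-1) * (wZ n m)⁻¹ := by group
    _ = (sZ n m j * wZ n m) * sZ n m (n-1) * (wZ n m)⁻¹ := by rw [hw]
    _ = sZ n m j * (wZ n m * sZ n m (n-1) * (wZ n m)⁻¹) := by group

lemma z_tb (hn : 3 ≤ n) : TZ n m * bZ n m = bZ n m * TZ n m := by
  have hw := z_wT n m hn
  have hwi : TZ n m * (wZ n m)⁻¹ = (wZ n m)⁻¹ * TZ n m :=
    ((show Commute (TZ n m) (wZ n m) from hw).inv_right).eq
  have hc : TZ n m * sZ n m (n-1) = sZ n m (n-1) * TZ n m :=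
    z_vcomm n m _ (Or.inl rfl) (by omega)
  simp only [bZ]
  calc TZ n m * (wZ n m * sZ n m (n-1) * (wZ n m)⁻¹)
      = (TZ n m * wZ n m) * sZ n m (n-1) * (wZ n m)⁻¹ := by group
    _ = (wZ n m * TZ n m) * sZ n m (n-1) * (wZ n m)⁻¹ := by rw [hw]
    _ = wZ n m * (TZ n m * sZ n m (n-1)) * (wZ n m)⁻¹ := by group
    _ = wZ n m * (sZ n m (n-1) * TZ n m) * (wZ n m)⁻¹ := by rw [hc]
    _ = wZ n m * sZ n m (n-1) * (TZ n m * (wZ n m)⁻¹) := by group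
    _ = wZ n m * sZ n m (n-1) * ((wZ n m)⁻¹ * TZ n m) := by rw [hwi]
    _ = wZ n m * sZ n m (n-1) * (wZ n m)⁻¹ * TZ n m := by group

def fB : BGen n → Z n m
  | .inl i => PresentedGroup.of (Sum.inl i)
  | .inr ⟨0, _⟩ => bZ n m
  | .inr ⟨1, _⟩ => TZ n m
  | .inr ⟨2, _⟩ => wZ n m

lemma liftB_h (i : Fin (n-1)) :
    (FreeGroup.lift (fB n m)) (bh i) = sZ n m ((i : ℕ) + 1) := by
  simp only [bh, FreeGroup.lift_apply_of, fB]
  exact (sZ_of n m i).symm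

lemma liftB_b : (FreeGroup.lift (fB n m)) bb = bZ n m := by
  simp only [bb, FreeGroup.lift_apply_of]
  rfl

lemma liftB_t : (FreeGroup.lift (fB n m)) bt = TZ n m := by
  simp only [bt, FreeGroup.lift_apply_of]
  rfl

lemma liftB_w : (FreeGroup.lift (fB n m)) bw = wZ n m := by
  simp only [bw, FreeGroup.lift_apply_of]
  rfl

lemma relsB_lift (hn : 3 ≤ n) : ∀ r ∈ brels n m, (FreeGroup.lift (fB n m)) r = 1 := by
  intro r hr
  rcases hr with ⟨i,j,hij,rfl⟩ | ⟨i,j,hij,rfl⟩ | ⟨i,hi,rfl⟩ | ⟨i,hi,rfl⟩ | ⟨i,hi,rfl⟩ |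
    ⟨i,hi,rfl⟩ | rfl | ⟨i,hi,rfl⟩ | ⟨i,j,hi,hj,rfl⟩ | rfl | ⟨i,hi,rfl⟩ | rfl |
    ⟨i,hi,rfl⟩ | ⟨i,hi,rfl⟩
  -- (R1) braid
  · have hi2 := i.isLt; have hj2 := j.isLt
    simp only [map_mul, map_inv, liftB_h]
    rw [mul_inv_eq_one]
    rw [show (j:ℕ)+1 = (i:ℕ)+1+1 from by omega]
    exact z_braid n m (by omega) (by omega)
  -- (R1) far commutation
  · have hi2 := i.isLt; have hj2 := j.isLt
    simp only [map_mul, map_inv, liftB_h]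
    rw [mul_inv_eq_one]
    exact z_comm n m (by omega) (by omega)
  -- (R1) b braid
  · simp only [map_mul, map_inv, liftB_h, liftB_b]
    rw [mul_inv_eq_one]
    rw [show (i:ℕ)+1 = n-2 from by omega]
    exact z_bs n m hn
  -- (R1) b commutation
  · simp only [map_mul, map_inv, liftB_h, liftB_b]
    rw [mul_inv_eq_one]
    exact z_bcomm n m hn (by omega) (by omega)
  -- (R2) t quasi
  · simp only [map_mul, map_inv, liftB_h, liftB_t]
    rw [mul_inv_eq_one]
    rw [show (i:ℕ)+1 = 1 from by omega]
    have h := z_quasi n m hn (TZ n m) (Or.inl rfl)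
    calc TZ n m * sZ n m 1 * TZ n m * sZ n m 1
        = TZ n m * sZ n m 1 * TZ n m * sZ n m 1 := rfl
      _ = sZ n m 1 * TZ n m * sZ n m 1 * TZ n m := by rw [h]
  -- (R2) t commutation
  · simp only [map_mul, map_inv, liftB_h, liftB_t]
    rw [mul_inv_eq_one]
    exact z_vcomm n m _ (Or.inl rfl) (by omega)
  -- (R2) t b
  · simp only [map_mul, map_inv, liftB_b, liftB_t]
    rw [mul_inv_eq_one]
    exact z_tb n m hn
  -- (R3)
  · simp only [map_mul, map_inv, alt_map, liftB_h, liftB_b]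
    rw [mul_inv_eq_one]
    rw [show (i:ℕ)+1 = n-1 from by omega]
    rw [z_eS n m hn, z_eB n m hn, alt_conj, alt_conj]
    rw [quasi_alt (sZ n m 1) (UZ n m) m (z_hq n m hn) (z_um n m)]
  -- (R4)
  · simp only [map_mul, map_inv, map_pow, liftB_h, liftB_b]
    rw [mul_inv_eq_one]
    rw [show (i:ℕ)+1 = n-1 from by omega, show (j:ℕ)+1 = n-2 from by omega]
    rw [z_eS n m hn, z_eB n m hn, z_eN n m hn]
    have hconj : ∀ x y z : Z n m,
        ((GZ n m)⁻¹ * x * GZ n m * ((GZ n m)⁻¹ * y * GZ n m) *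
          ((GZ n m)⁻¹ * z * GZ n m)) ^ 2 = (GZ n m)⁻¹ * ((x * y * z) ^ 2) * GZ n m := by
      intro x y z; rw [pow_two, pow_two]; group
    rw [hconj, hconj]
    congr 1
    congr 1
    simp only [NZ]
    have cm1 : Commute (sZ n m 1) (pr (sZ n m) 3 n) := z_s1N n m
    have cmu : Commute (UZ n m) (pr (sZ n m) 3 n) := z_ucomm_pr n m (by omega)
    have cmc : Commute (UZ n m * sZ n m 1 * (UZ n m)⁻¹) (pr (sZ n m) 3 n) :=
      (cmu.mul_left cm1).mul_left cmu.inv_left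
    have hcN : (UZ n m * sZ n m 1 * (UZ n m)⁻¹) * (pr (sZ n m) 3 n)⁻¹
        = (pr (sZ n m) 3 n)⁻¹ * (UZ n m * sZ n m 1 * (UZ n m)⁻¹) := cmc.inv_right.eq
    have hcN2 : (UZ n m * sZ n m 1 * (UZ n m)⁻¹) * pr (sZ n m) 3 n
        = pr (sZ n m) 3 n * (UZ n m * sZ n m 1 * (UZ n m)⁻¹) := cmc.eq
    have cN1 : sZ n m 1 * pr (sZ n m) 3 n = pr (sZ n m) 3 n * sZ n m 1 := cm1.eq
    have cN1i : sZ n m 1 * (pr (sZ n m) 3 n)⁻¹ = (pr (sZ n m) 3 n)⁻¹ * sZ n m 1 :=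
      cm1.inv_right.eq
    have eL : sZ n m 1 * (UZ n m * sZ n m 1 * (UZ n m)⁻¹) *
          ((pr (sZ n m) 3 n)⁻¹ * (sZ n m 2 * pr (sZ n m) 3 n))
        = (pr (sZ n m) 3 n)⁻¹ *
          (sZ n m 1 * (UZ n m * sZ n m 1 * (UZ n m)⁻¹) * sZ n m 2) * pr (sZ n m) 3 n := by
      calc sZ n m 1 * (UZ n m * sZ n m 1 * (UZ n m)⁻¹) *
            ((pr (sZ n m) 3 n)⁻¹ * (sZ n m 2 * pr (sZ n m) 3 n))
          = sZ n m 1 * ((UZ n m * sZ n m 1 * (UZ n m)⁻¹) * (pr (sZ n m) 3 n)⁻¹) *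
            (sZ n m 2 * pr (sZ n m) 3 n) := by group
        _ = sZ n m 1 * ((pr (sZ n m) 3 n)⁻¹ * (UZ n m * sZ n m 1 * (UZ n m)⁻¹)) *
            (sZ n m 2 * pr (sZ n m) 3 n) := by rw [hcN]
        _ = (sZ n m 1 * (pr (sZ n m) 3 n)⁻¹) * (UZ n m * sZ n m 1 * (UZ n m)⁻¹) *
            (sZ n m 2 * pr (sZ n m) 3 n) := by group
        _ = ((pr (sZ n m) 3 n)⁻¹ * sZ n m 1) * (UZ n m * sZ n m 1 * (UZ n m)⁻¹) *
            (sZ n m 2 * pr (sZ n m) 3 n) := by rw [cN1i]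
        _ = (pr (sZ n m) 3 n)⁻¹ *
            (sZ n m 1 * (UZ n m * sZ n m 1 * (UZ n m)⁻¹) * sZ n m 2) * pr (sZ n m) 3 n := by
              group
    have eR : (pr (sZ n m) 3 n)⁻¹ * (sZ n m 2 * pr (sZ n m) 3 n) * sZ n m 1 *
          (UZ n m * sZ n m 1 * (UZ n m)⁻¹)
        = (pr (sZ n m) 3 n)⁻¹ *
          (sZ n m 2 * sZ n m 1 * (UZ n m * sZ n m 1 * (UZ n m)⁻¹)) * pr (sZ n m) 3 n := by
      calc (pr (sZ n m) 3 n)⁻¹ * (sZ n m 2 * pr (sZ n m) 3 n) * sZ n m 1 *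
            (UZ n m * sZ n m 1 * (UZ n m)⁻¹)
          = (pr (sZ n m) 3 n)⁻¹ * sZ n m 2 * (pr (sZ n m) 3 n * sZ n m 1) *
            (UZ n m * sZ n m 1 * (UZ n m)⁻¹) := by group
        _ = (pr (sZ n m) 3 n)⁻¹ * sZ n m 2 * (sZ n m 1 * pr (sZ n m) 3 n) *
            (UZ n m * sZ n m 1 * (UZ n m)⁻¹) := by rw [← cN1]
        _ = (pr (sZ n m) 3 n)⁻¹ * sZ n m 2 * sZ n m 1 *
            (pr (sZ n m) 3 n * (UZ n m * sZ n m 1 * (UZ n m)⁻¹)) := by group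
        _ = (pr (sZ n m) 3 n)⁻¹ * sZ n m 2 * sZ n m 1 *
            ((UZ n m * sZ n m 1 * (UZ n m)⁻¹) * pr (sZ n m) 3 n) := by rw [← hcN2]
        _ = (pr (sZ n m) 3 n)⁻¹ *
            (sZ n m 2 * sZ n m 1 * (UZ n m * sZ n m 1 * (UZ n m)⁻¹)) * pr (sZ n m) 3 n := by
              group
    rw [eL, eR]
    have hpow : ∀ X : Z n m, ((pr (sZ n m) 3 n)⁻¹ * X * pr (sZ n m) 3 n) ^ 2
        = (pr (sZ n m) 3 n)⁻¹ * X ^ 2 * pr (sZ n m) 3 n := by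
      intro X
      rw [show (pr (sZ n m) 3 n)⁻¹ * X * pr (sZ n m) 3 n
          = (pr (sZ n m) 3 n)⁻¹ * X * ((pr (sZ n m) 3 n)⁻¹)⁻¹ from by rw [inv_inv],
        conj_pow, inv_inv]
    rw [hpow, hpow]
    congr 1
    congr 1
    exact quasi_r4 (sZ n m 1) (sZ n m 2) (UZ n m)
      (by have h := z_braid n m (j := 1) (le_refl 1) (by omega); simpa using h)
      (z_vcomm n m _ (Or.inr rfl) (le_refl 2)) (z_hq n m hn)
  -- (S1)
  · simp only [map_pow, liftB_w]
    exact z_wm n m hn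
  -- (C1) w h
  · simp only [map_mul, map_inv, liftB_h, liftB_w]
    rw [mul_inv_eq_one]
    have h := z_wcomm n m hn (j := (i:ℕ)+1) (by omega) (by omega)
    calc wZ n m * sZ n m ((i:ℕ)+1) * (wZ n m)⁻¹
        = sZ n m ((i:ℕ)+1) * wZ n m * (wZ n m)⁻¹ := by rw [h]
      _ = sZ n m ((i:ℕ)+1) := by group
  -- (C1) w t
  · simp only [map_mul, map_inv, liftB_t, liftB_w]
    rw [mul_inv_eq_one]
    have h := z_wT n m hn
    calc wZ n m * TZ n m * (wZ n m)⁻¹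
        = (TZ n m * wZ n m) * (wZ n m)⁻¹ := by rw [← h]
      _ = TZ n m := by group
  -- (C2) w h = b
  · simp only [map_mul, map_inv, liftB_h, liftB_w, liftB_b]
    rw [mul_inv_eq_one]
    rw [show (i:ℕ)+1 = n-1 from by omega]
    simp only [bZ]
  -- (C2) w b w⁻¹
  · simp only [map_mul, map_inv, liftB_h, liftB_w, liftB_b]
    rw [mul_inv_eq_one]
    rw [show (i:ℕ)+1 = n-1 from by omega]
    simp only [bZ]
    exact quasi_conj (wZ n m) (sZ n m (n-1)) (z_wquasi n m hn)

end ZSide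

section BSide
variable (n m : ℕ)

lemma relB {r : FreeGroup (BGen n)} (h : r ∈ brels n m) :
    PresentedGroup.mk (brels n m) r = 1 :=
  (QuotientGroup.eq_one_iff r).mpr (Subgroup.subset_normalClosure h)

def sB (j : ℕ) : B n m :=
  if h : 1 ≤ j ∧ j ≤ n - 1 then PresentedGroup.of (Sum.inl ⟨j - 1, by omega⟩) else 1

def TB : B n m := PresentedGroup.of (Sum.inr 1)
def WB : B n m := PresentedGroup.of (Sum.inr 2)
def BBb : B n m := PresentedGroup.of (Sum.inr 0)

lemma sB_of (i : Fin (n - 1)) : sB n m ((i : ℕ) + 1) = PresentedGroup.of (Sum.inl i) := by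
  have h : 1 ≤ (i : ℕ) + 1 ∧ (i : ℕ) + 1 ≤ n - 1 := ⟨by omega, by omega⟩
  simp only [sB, dif_pos h, Nat.add_sub_cancel, Fin.eta]

lemma sB_out {j : ℕ} (h : ¬(1 ≤ j ∧ j ≤ n - 1)) : sB n m j = 1 := by
  simp only [sB, dif_neg h]

lemma mk_bh (i : Fin (n - 1)) :
    PresentedGroup.mk (brels n m) (bh i) = sB n m ((i : ℕ) + 1) := (sB_of n m i).symm

lemma mk_bt : PresentedGroup.mk (brels n m) bt = TB n m := rfl
lemma mk_bw : PresentedGroup.mk (brels n m) bw = WB n m := rfl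
lemma mk_bb : PresentedGroup.mk (brels n m) bb = BBb n m := rfl

lemma b_braid {j : ℕ} (h1 : 1 ≤ j) (h2 : j + 2 ≤ n) :
    sB n m j * sB n m (j+1) * sB n m j = sB n m (j+1) * sB n m j * sB n m (j+1) := by
  have hi : j - 1 < n - 1 := by omega
  have hj : j < n - 1 := by omega
  have h := relB n m (show bh ⟨j-1, hi⟩ * bh ⟨j, hj⟩ * bh ⟨j-1, hi⟩ *
      (bh ⟨j, hj⟩ * bh ⟨j-1, hi⟩ * bh ⟨j, hj⟩)⁻¹ ∈ brels n m from
    Or.inl ⟨⟨j-1, hi⟩, ⟨j, hj⟩, by simp; omega, rfl⟩)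
  simp only [map_mul, map_inv, mk_bh] at h
  rw [mul_inv_eq_one] at h
  have e : j - 1 + 1 = j := by omega
  simp only [e] at h
  exact h

lemma b_comm {j k : ℕ} (h1 : j + 2 ≤ k) (h2 : k ≤ n - 1) :
    sB n m j * sB n m k = sB n m k * sB n m j := by
  rcases Nat.eq_zero_or_pos j with hj0 | hj0
  · subst hj0; rw [sB_out n m (j := 0) (by omega)]; group
  have hi : j - 1 < n - 1 := by omega
  have hk : k - 1 < n - 1 := by omega
  have h := relB n m (show bh ⟨j-1, hi⟩ * bh ⟨k-1, hk⟩ * (bh ⟨k-1, hk⟩ * bh ⟨j-1, hi⟩)⁻¹ ∈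
      brels n m from Or.inr (Or.inl ⟨⟨j-1, hi⟩, ⟨k-1, hk⟩, by simp; omega, rfl⟩))
  simp only [map_mul, map_inv, mk_bh] at h
  rw [mul_inv_eq_one] at h
  have e1 : j - 1 + 1 = j := by omega
  have e2 : k - 1 + 1 = k := by omega
  simp only [e1, e2] at h
  exact h

lemma b_tcomm {j : ℕ} (h1 : 2 ≤ j) : TB n m * sB n m j = sB n m j * TB n m := by
  by_cases hj : j ≤ n - 1
  swap
  · rw [sB_out n m (j := j) (by omega)]; group
  have hi : j - 1 < n - 1 := by omega
  have e : j - 1 + 1 = j := by omega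
  have h := relB n m (show bt * bh ⟨j-1, hi⟩ * (bh ⟨j-1, hi⟩ * bt)⁻¹ ∈ brels n m from
    Or.inr (Or.inr (Or.inr (Or.inr (Or.inr (Or.inl ⟨⟨j-1, hi⟩, by simp; omega, rfl⟩))))))
  simp only [map_mul, map_inv, mk_bh, mk_bt] at h
  rw [mul_inv_eq_one] at h
  simp only [e] at h
  exact h

lemma b_tq (hn : 3 ≤ n) :
    TB n m * sB n m 1 * TB n m * sB n m 1 = sB n m 1 * TB n m * sB n m 1 * TB n m := by
  have hi : (0 : ℕ) < n - 1 := by omega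
  have h := relB n m (show bt * bh ⟨0, hi⟩ * bt * bh ⟨0, hi⟩ *
      (bh ⟨0, hi⟩ * bt * bh ⟨0, hi⟩ * bt)⁻¹ ∈ brels n m from
    Or.inr (Or.inr (Or.inr (Or.inr (Or.inl ⟨⟨0, hi⟩, by simp, rfl⟩)))))
  simp only [map_mul, map_inv, mk_bh, mk_bt] at h
  rw [mul_inv_eq_one] at h
  simpa using h

lemma b_wm : WB n m ^ m = 1 := by
  have h := relB n m (show bw ^ m ∈ brels n m from
    Or.inr (Or.inr (Or.inr (Or.inr (Or.inr (Or.inr (Or.inr (Or.inr (Or.inr (Or.inl rfl))))))))))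
  rwa [map_pow, mk_bw] at h

lemma b_wh {j : ℕ} (h1 : 1 ≤ j) (h2 : j + 2 ≤ n) :
    WB n m * sB n m j = sB n m j * WB n m := by
  have hi : j - 1 < n - 1 := by omega
  have e : j - 1 + 1 = j := by omega
  have h := relB n m (show bw * bh ⟨j-1, hi⟩ * bw⁻¹ * (bh ⟨j-1, hi⟩)⁻¹ ∈ brels n m from
    Or.inr (Or.inr (Or.inr (Or.inr (Or.inr (Or.inr (Or.inr (Or.inr (Or.inr (Or.inr
      (Or.inl ⟨⟨j-1, hi⟩, by simp; omega, rfl⟩)))))))))))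
  simp only [map_mul, map_inv, mk_bh, mk_bw] at h
  rw [mul_inv_eq_one] at h
  simp only [e] at h
  calc WB n m * sB n m j = (WB n m * sB n m j * (WB n m)⁻¹) * WB n m := by group
    _ = sB n m j * WB n m := by rw [h]

lemma b_wt : WB n m * TB n m = TB n m * WB n m := by
  have h := relB n m (show bw * bt * bw⁻¹ * bt⁻¹ ∈ brels n m from
    Or.inr (Or.inr (Or.inr (Or.inr (Or.inr (Or.inr (Or.inr (Or.inr (Or.inr (Or.inr
      (Or.inr (Or.inl rfl))))))))))))
  simp only [map_mul, map_inv, mk_bt, mk_bw] at h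
  rw [mul_inv_eq_one] at h
  calc WB n m * TB n m = (WB n m * TB n m * (WB n m)⁻¹) * WB n m := by group
    _ = TB n m * WB n m := by rw [h]

lemma b_c2a (hn : 3 ≤ n) : WB n m * sB n m (n-1) * (WB n m)⁻¹ = BBb n m := by
  have hi : n - 2 < n - 1 := by omega
  have e : n - 2 + 1 = n - 1 := by omega
  have h := relB n m (show bw * bh ⟨n-2, hi⟩ * bw⁻¹ * bb⁻¹ ∈ brels n m from
    Or.inr (Or.inr (Or.inr (Or.inr (Or.inr (Or.inr (Or.inr (Or.inr (Or.inr (Or.inr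
      (Or.inr (Or.inr (Or.inl ⟨⟨n-2, hi⟩, by simp; omega, rfl⟩)))))))))))))
  simp only [map_mul, map_inv, mk_bh, mk_bw, mk_bb] at h
  rw [mul_inv_eq_one] at h
  simp only [e] at h
  exact h

lemma b_c2b (hn : 3 ≤ n) :
    WB n m * BBb n m * (WB n m)⁻¹ = (BBb n m)⁻¹ * sB n m (n-1) * BBb n m := by
  have hi : n - 2 < n - 1 := by omega
  have e : n - 2 + 1 = n - 1 := by omega
  have h := relB n m (show bw * bb * bw⁻¹ * (bb⁻¹ * bh ⟨n-2, hi⟩ * bb)⁻¹ ∈ brels n m from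
    Or.inr (Or.inr (Or.inr (Or.inr (Or.inr (Or.inr (Or.inr (Or.inr (Or.inr (Or.inr
      (Or.inr (Or.inr (Or.inr ⟨⟨n-2, hi⟩, by simp; omega, rfl⟩)))))))))))))
  simp only [map_mul, map_inv, mk_bh, mk_bw, mk_bb] at h
  rw [mul_inv_eq_one] at h
  simp only [e] at h
  exact h

lemma b_squasi (hn : 3 ≤ n) :
    WB n m * sB n m (n-1) * WB n m * sB n m (n-1)
      = sB n m (n-1) * WB n m * sB n m (n-1) * WB n m := by
  apply conj_quasi
  rw [b_c2a n m hn]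
  exact b_c2b n m hn

def HB : B n m := pr (sB n m) 1 n
def KB : B n m := pr (sB n m) 2 n
def KpB : B n m := pr (sB n m) 1 (n-1)

lemma bshift {j : ℕ} (h1 : 1 ≤ j) (h2 : j + 2 ≤ n) :
    HB n m * sB n m j = sB n m (j+1) * HB n m := by
  simp only [HB]
  exact pr_shift (sB n m) (fun i hi1 hi2 => b_braid n m hi1 hi2)
    (fun i k hi1 hi2 hi3 => b_comm n m hi2 (by omega)) h1 h2

lemma bCL1 (hn : 3 ≤ n) :
    KB n m * (HB n m * sB n m (n-1)) = sB n m 1 * (KB n m * HB n m) := by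
  simp only [HB, KB]
  have h := pr_cl (sB n m) (n-2) (show n = 1 + (n-2) + 1 by omega)
    (fun i hi1 hi2 => b_braid n m hi1 hi2)
    (fun i k hi1 hi2 hi3 => b_comm n m hi2 (by omega))
  simpa using h

lemma b_HK (hn : 3 ≤ n) : HB n m * KpB n m = KB n m * HB n m := by
  simp only [HB, KB, KpB]
  have h := pr_map (sB n m) (pr (sB n m) 1 n) (n-2) (show n-1 = 1 + (n-2) by omega)
    (fun k hk1 hk2 => bshift n m hk1 (by omega))
  rw [show n - 1 + 1 = n from by omega] at h
  exact h

lemma b_dual (hn : 3 ≤ n) :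
    (HB n m)⁻¹ * sB n m 1 * HB n m = KpB n m * sB n m (n-1) * (KpB n m)⁻¹ := by
  have e : sB n m 1 = KB n m * (HB n m * sB n m (n-1)) * (KB n m * HB n m)⁻¹ := by
    rw [bCL1 n m hn]; group
  have hKH : (HB n m)⁻¹ * KB n m * HB n m = KpB n m := by
    calc (HB n m)⁻¹ * KB n m * HB n m = (HB n m)⁻¹ * (KB n m * HB n m) := by group
      _ = (HB n m)⁻¹ * (HB n m * KpB n m) := by rw [← b_HK n m hn]
      _ = KpB n m := by group
  calc (HB n m)⁻¹ * sB n m 1 * HB n m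
      = (HB n m)⁻¹ * (KB n m * (HB n m * sB n m (n-1)) * (KB n m * HB n m)⁻¹) * HB n m := by
        rw [← e]
    _ = ((HB n m)⁻¹ * KB n m * HB n m) * sB n m (n-1) *
        ((HB n m)⁻¹ * KB n m * HB n m)⁻¹ := by group
    _ = KpB n m * sB n m (n-1) * (KpB n m)⁻¹ := by rw [hKH]

lemma b_wKp (hn : 3 ≤ n) : Commute (WB n m) (KpB n m) := by
  simp only [KpB]
  exact pr_commute _ _ (fun k hk1 hk2 => b_wh n m hk1 (by omega))

lemma b_tK : Commute (TB n m) (KB n m) := by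
  simp only [KB]
  exact pr_commute _ _ (fun k hk1 hk2 => b_tcomm n m hk1)

lemma b_uquasi (hn : 3 ≤ n) :
    sB n m 1 * (HB n m * WB n m * (HB n m)⁻¹) * sB n m 1 * (HB n m * WB n m * (HB n m)⁻¹)
      = (HB n m * WB n m * (HB n m)⁻¹) * sB n m 1 * (HB n m * WB n m * (HB n m)⁻¹) *
        sB n m 1 := by
  have hd := b_dual n m hn
  have cw : (KpB n m)⁻¹ * WB n m * KpB n m = WB n m := by
    have := (b_wKp n m hn).eq
    calc (KpB n m)⁻¹ * WB n m * KpB n m = (KpB n m)⁻¹ * (WB n m * KpB n m) := by group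
      _ = (KpB n m)⁻¹ * (KpB n m * WB n m) := by rw [← this]
      _ = WB n m := by group
  have hq := b_squasi n m hn
  calc sB n m 1 * (HB n m * WB n m * (HB n m)⁻¹) * sB n m 1 *
        (HB n m * WB n m * (HB n m)⁻¹)
      = HB n m * (((HB n m)⁻¹ * sB n m 1 * HB n m) * WB n m *
        ((HB n m)⁻¹ * sB n m 1 * HB n m) * WB n m) * (HB n m)⁻¹ := by group
    _ = HB n m * ((KpB n m * sB n m (n-1) * (KpB n m)⁻¹) * WB n m *
        (KpB n m * sB n m (n-1) * (KpB n m)⁻¹) * WB n m) * (HB n m)⁻¹ := by rw [hd]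
    _ = HB n m * (KpB n m * (sB n m (n-1) * ((KpB n m)⁻¹ * WB n m * KpB n m) *
        sB n m (n-1) * ((KpB n m)⁻¹ * WB n m * KpB n m)) * (KpB n m)⁻¹) * (HB n m)⁻¹ := by
          group
    _ = HB n m * (KpB n m * (sB n m (n-1) * WB n m * sB n m (n-1) * WB n m) *
        (KpB n m)⁻¹) * (HB n m)⁻¹ := by rw [cw]
    _ = HB n m * (KpB n m * (WB n m * sB n m (n-1) * WB n m * sB n m (n-1)) *
        (KpB n m)⁻¹) * (HB n m)⁻¹ := by rw [← hq]
    _ = HB n m * (KpB n m * (((KpB n m)⁻¹ * WB n m * KpB n m) * sB n m (n-1) *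
        ((KpB n m)⁻¹ * WB n m * KpB n m) * sB n m (n-1)) * (KpB n m)⁻¹) * (HB n m)⁻¹ := by
          rw [cw]
    _ = HB n m * (WB n m * ((KpB n m * sB n m (n-1) * (KpB n m)⁻¹)) * WB n m *
        (KpB n m * sB n m (n-1) * (KpB n m)⁻¹)) * (HB n m)⁻¹ := by group
    _ = HB n m * (WB n m * (((HB n m)⁻¹ * sB n m 1 * HB n m)) * WB n m *
        ((HB n m)⁻¹ * sB n m 1 * HB n m)) * (HB n m)⁻¹ := by rw [← hd]
    _ = (HB n m * WB n m * (HB n m)⁻¹) * sB n m 1 * (HB n m * WB n m * (HB n m)⁻¹) *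
        sB n m 1 := by group

end BSide

section Iso
variable (n m : ℕ)

lemma b_tu (hn : 3 ≤ n) :
    TB n m * (KB n m * WB n m * (KB n m)⁻¹) = (KB n m * WB n m * (KB n m)⁻¹) * TB n m := by
  have ct : TB n m * KB n m = KB n m * TB n m := (b_tK n m).eq
  have cti : TB n m * (KB n m)⁻¹ = (KB n m)⁻¹ * TB n m := (b_tK n m).inv_right.eq
  calc TB n m * (KB n m * WB n m * (KB n m)⁻¹)
      = (TB n m * KB n m) * WB n m * (KB n m)⁻¹ := by group
    _ = (KB n m * TB n m) * WB n m * (KB n m)⁻¹ := by rw [ct]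
    _ = KB n m * (TB n m * WB n m) * (KB n m)⁻¹ := by group
    _ = KB n m * (WB n m * TB n m) * (KB n m)⁻¹ := by rw [← b_wt n m]
    _ = KB n m * WB n m * (TB n m * (KB n m)⁻¹) := by group
    _ = KB n m * WB n m * ((KB n m)⁻¹ * TB n m) := by rw [cti]
    _ = (KB n m * WB n m * (KB n m)⁻¹) * TB n m := by group

lemma hprodB_eq (hn : 3 ≤ n) : hprodB n m = pr (sB n m) 1 n := by
  unfold hprodB
  have e : (fun i : Fin (n-1) => (PresentedGroup.of (Sum.inl i) : B n m))
      = fun i : Fin (n-1) => sB n m (1 + (i : ℕ)) := by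
    funext i
    rw [show 1 + (i : ℕ) = (i : ℕ) + 1 from by omega]
    exact (sB_of n m i).symm
  rw [e, ofFn_prod (sB n m) (n-1) 1, show 1 + (n-1) = n from by omega]

def fZ : ZGen n → B n m
  | .inl i => PresentedGroup.of (Sum.inl i)
  | .inr false => PresentedGroup.of (Sum.inr 1)
  | .inr true => hprodB n m * PresentedGroup.of (Sum.inr 2) * (hprodB n m)⁻¹

lemma liftZ_h (i : Fin (n-1)) : (FreeGroup.lift (fZ n m)) (zh i) = sB n m ((i : ℕ) + 1) := by
  simp only [zh, FreeGroup.lift_apply_of, fZ]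
  exact (sB_of n m i).symm

lemma liftZ_t : (FreeGroup.lift (fZ n m)) zt = TB n m := by
  simp only [zt, FreeGroup.lift_apply_of]
  rfl

lemma liftZ_u (hn : 3 ≤ n) :
    (FreeGroup.lift (fZ n m)) zu = HB n m * WB n m * (HB n m)⁻¹ := by
  simp only [zu, FreeGroup.lift_apply_of]
  show hprodB n m * PresentedGroup.of (Sum.inr 2) * (hprodB n m)⁻¹ = _
  rw [hprodB_eq n m hn]
  rfl

lemma relsZ_lift (hn : 3 ≤ n) : ∀ r ∈ zrels n m, (FreeGroup.lift (fZ n m)) r = 1 := by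
  intro r hr
  rcases hr with rfl | ⟨i,j,hij,rfl⟩ | ⟨i,j,hij,rfl⟩ | ⟨v,i,hv,hi,rfl⟩ | ⟨v,i,hv,hi,rfl⟩ |
    ⟨i,hi,rfl⟩
  -- u^m
  · simp only [map_pow, liftZ_u n m hn]
    rw [conj_pow, b_wm n m, mul_one, mul_inv_cancel]
  -- braid
  · have hi2 := i.isLt; have hj2 := j.isLt
    simp only [map_mul, map_inv, liftZ_h]
    rw [mul_inv_eq_one]
    rw [show (j : ℕ)+1 = (i : ℕ)+1+1 from by omega]
    exact b_braid n m (by omega) (by omega)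
  -- far comm
  · have hi2 := i.isLt; have hj2 := j.isLt
    simp only [map_mul, map_inv, liftZ_h]
    rw [mul_inv_eq_one]
    exact b_comm n m (by omega) (by omega)
  -- v comm
  · have hi2 := i.isLt
    rcases hv with rfl | rfl
    · simp only [map_mul, map_inv, liftZ_h, liftZ_t]
      rw [mul_inv_eq_one]
      exact b_tcomm n m (by omega)
    · simp only [map_mul, map_inv, liftZ_h, liftZ_u n m hn]
      rw [mul_inv_eq_one]
      have hs := bshift n m (show 1 ≤ (i : ℕ) by omega) (show (i : ℕ)+2 ≤ n by omega)
      have hw := b_wh n m (show 1 ≤ (i : ℕ) by omega) (show (i : ℕ)+2 ≤ n by omega)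
      calc HB n m * WB n m * (HB n m)⁻¹ * sB n m ((i : ℕ)+1)
          = HB n m * WB n m * ((HB n m)⁻¹ * (sB n m ((i : ℕ)+1) * HB n m)) * (HB n m)⁻¹ := by
            group
        _ = HB n m * WB n m * ((HB n m)⁻¹ * (HB n m * sB n m (i : ℕ))) * (HB n m)⁻¹ := by
            rw [← hs]
        _ = HB n m * (WB n m * sB n m (i : ℕ)) * (HB n m)⁻¹ := by group
        _ = HB n m * (sB n m (i : ℕ) * WB n m) * (HB n m)⁻¹ := by rw [hw]
        _ = (HB n m * sB n m (i : ℕ)) * (WB n m * (HB n m)⁻¹) := by group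
        _ = (sB n m ((i : ℕ)+1) * HB n m) * (WB n m * (HB n m)⁻¹) := by rw [hs]
        _ = sB n m ((i : ℕ)+1) * (HB n m * WB n m * (HB n m)⁻¹) := by group
  -- v quasi
  · rcases hv with rfl | rfl
    · simp only [map_mul, map_inv, liftZ_h, liftZ_t]
      rw [mul_inv_eq_one]
      rw [show (i : ℕ)+1 = 1 from by omega]
      rw [← b_tq n m hn]
      group
    · simp only [map_mul, map_inv, liftZ_h, liftZ_u n m hn]
      rw [mul_inv_eq_one]
      rw [show (i : ℕ)+1 = 1 from by omega]
      rw [b_uquasi n m hn]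
      group
  -- t and conjugated u
  · simp only [map_mul, map_inv, liftZ_h, liftZ_t, liftZ_u n m hn]
    rw [mul_inv_eq_one]
    rw [show (i : ℕ)+1 = 1 from by omega]
    have hH : HB n m = sB n m 1 * KB n m := by
      simp only [HB, KB]; exact pr_cons _ (by omega)
    have key : (sB n m 1)⁻¹ * (HB n m * WB n m * (HB n m)⁻¹) * sB n m 1
        = KB n m * WB n m * (KB n m)⁻¹ := by
      rw [hH]; group
    rw [key]
    exact b_tu n m hn

def phiZB (hn : 3 ≤ n) : Z n m →* B n m := PresentedGroup.toGroup (relsZ_lift n m hn)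
def psiBZ (hn : 3 ≤ n) : B n m →* Z n m := PresentedGroup.toGroup (relsB_lift n m hn)

lemma phi_s (hn : 3 ≤ n) (j : ℕ) : phiZB n m hn (sZ n m j) = sB n m j := by
  by_cases h : 1 ≤ j ∧ j ≤ n - 1
  · simp only [sZ, sB, dif_pos h]
    exact PresentedGroup.toGroup.of _
  · simp only [sZ, sB, dif_neg h, map_one]

lemma psi_s (hn : 3 ≤ n) (j : ℕ) : psiBZ n m hn (sB n m j) = sZ n m j := by
  by_cases h : 1 ≤ j ∧ j ≤ n - 1
  · simp only [sZ, sB, dif_pos h]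
    exact PresentedGroup.toGroup.of _
  · simp only [sZ, sB, dif_neg h, map_one]

lemma phi_pr (hn : 3 ≤ n) (a b : ℕ) :
    phiZB n m hn (pr (sZ n m) a b) = pr (sB n m) a b := by
  rw [map_pr]
  congr 1
  funext k
  exact phi_s n m hn k

lemma psi_pr (hn : 3 ≤ n) (a b : ℕ) :
    psiBZ n m hn (pr (sB n m) a b) = pr (sZ n m) a b := by
  rw [map_pr]
  congr 1
  funext k
  exact psi_s n m hn k

lemma phi_u (hn : 3 ≤ n) : phiZB n m hn (UZ n m) = HB n m * WB n m * (HB n m)⁻¹ := by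
  have h : phiZB n m hn (UZ n m) = fZ n m (Sum.inr true) := PresentedGroup.toGroup.of _
  rw [h]
  show hprodB n m * PresentedGroup.of (Sum.inr 2) * (hprodB n m)⁻¹ = _
  rw [hprodB_eq n m hn]
  rfl

lemma phi_w (hn : 3 ≤ n) : phiZB n m hn (wZ n m) = WB n m := by
  simp only [wZ, map_mul, map_inv, phi_u n m hn]
  simp only [HZ, phi_pr n m hn]
  rw [show pr (sB n m) 1 n = HB n m from rfl]
  group

lemma psi_w (hn : 3 ≤ n) : psiBZ n m hn (WB n m) = wZ n m := PresentedGroup.toGroup.of _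

lemma psi_t (hn : 3 ≤ n) : psiBZ n m hn (TB n m) = TZ n m := PresentedGroup.toGroup.of _
lemma psi_b (hn : 3 ≤ n) : psiBZ n m hn (BBb n m) = bZ n m := PresentedGroup.toGroup.of _
lemma phi_t (hn : 3 ≤ n) : phiZB n m hn (TZ n m) = TB n m := PresentedGroup.toGroup.of _

lemma comp_psi_phi (hn : 3 ≤ n) :
    (psiBZ n m hn).comp (phiZB n m hn) = MonoidHom.id (Z n m) := by
  apply PresentedGroup.ext
  intro x
  rcases x with i | b
  · show psiBZ n m hn (phiZB n m hn (PresentedGroup.of (Sum.inl i))) = _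
    rw [show phiZB n m hn (PresentedGroup.of (Sum.inl i)) = fZ n m (Sum.inl i) from
      PresentedGroup.toGroup.of _]
    exact PresentedGroup.toGroup.of _
  · rcases b with _ | _
    · show psiBZ n m hn (phiZB n m hn (PresentedGroup.of (Sum.inr false))) = _
      rw [show phiZB n m hn (PresentedGroup.of (Sum.inr false)) = fZ n m (Sum.inr false) from
        PresentedGroup.toGroup.of _]
      exact PresentedGroup.toGroup.of _
    · show psiBZ n m hn (phiZB n m hn (PresentedGroup.of (Sum.inr true))) = _
      rw [show phiZB n m hn (PresentedGroup.of (Sum.inr true)) = fZ n m (Sum.inr true) from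
        PresentedGroup.toGroup.of _]
      show psiBZ n m hn (hprodB n m * PresentedGroup.of (Sum.inr 2) * (hprodB n m)⁻¹) = _
      rw [hprodB_eq n m hn]
      rw [map_mul, map_mul, map_inv, psi_pr n m hn]
      rw [show psiBZ n m hn (PresentedGroup.of (Sum.inr 2)) = wZ n m from
        PresentedGroup.toGroup.of _]
      simp only [wZ, HZ]
      have : PresentedGroup.of (rels := zrels n m) (Sum.inr true) = UZ n m := rfl
      rw [this]
      simp only [MonoidHom.id_apply]
      group

lemma comp_phi_psi (hn : 3 ≤ n) :
    (phiZB n m hn).comp (psiBZ n m hn) = MonoidHom.id (B n m) := by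
  apply PresentedGroup.ext
  intro x
  rcases x with i | b
  · show phiZB n m hn (psiBZ n m hn (PresentedGroup.of (Sum.inl i))) = _
    rw [show psiBZ n m hn (PresentedGroup.of (Sum.inl i)) = fB n m (Sum.inl i) from
      PresentedGroup.toGroup.of _]
    exact PresentedGroup.toGroup.of _
  · have hb0 : psiBZ n m hn (PresentedGroup.of (Sum.inr 0)) = bZ n m :=
      PresentedGroup.toGroup.of _
    have hb1 : psiBZ n m hn (PresentedGroup.of (Sum.inr 1)) = TZ n m :=
      PresentedGroup.toGroup.of _
    have hb2 : psiBZ n m hn (PresentedGroup.of (Sum.inr 2)) = wZ n m :=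
      PresentedGroup.toGroup.of _
    have hphib : phiZB n m hn (bZ n m) = PresentedGroup.of (Sum.inr 0) := by
      simp only [bZ, map_mul, map_inv, phi_w n m hn, phi_s n m hn]
      rw [show (PresentedGroup.of (Sum.inr 0) : B n m) = BBb n m from rfl]
      exact b_c2a n m hn
    fin_cases b
    · show phiZB n m hn (psiBZ n m hn (PresentedGroup.of (Sum.inr 0)))
        = MonoidHom.id (B n m) (PresentedGroup.of (Sum.inr 0))
      rw [hb0, hphib]
      rfl
    · show phiZB n m hn (psiBZ n m hn (PresentedGroup.of (Sum.inr 1)))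
        = MonoidHom.id (B n m) (PresentedGroup.of (Sum.inr 1))
      rw [hb1]
      exact phi_t n m hn
    · show phiZB n m hn (psiBZ n m hn (PresentedGroup.of (Sum.inr 2)))
        = MonoidHom.id (B n m) (PresentedGroup.of (Sum.inr 2))
      rw [hb2]
      exact phi_w n m hn

end Iso

theorem stmt_5 (n m : ℕ) (hn : 3 ≤ n) (hm : 2 ≤ m) :
    ∃ e : Z n m ≃* B n m,
      (∀ i : Fin (n - 1),
        e (PresentedGroup.of (Sum.inl i)) = PresentedGroup.of (Sum.inl i)) ∧
      e (PresentedGroup.of (Sum.inr false)) = PresentedGroup.of (Sum.inr 1) ∧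
      e (PresentedGroup.of (Sum.inr true)) =
        hprodB n m * PresentedGroup.of (Sum.inr 2) * (hprodB n m)⁻¹ := by
  refine ⟨MonoidHom.toMulEquiv (phiZB n m hn) (psiBZ n m hn)
    (comp_psi_phi n m hn) (comp_phi_psi n m hn), ?_, ?_, ?_⟩
  · intro i
    show phiZB n m hn (PresentedGroup.of (Sum.inl i)) = _
    exact PresentedGroup.toGroup.of _
  · show phiZB n m hn (PresentedGroup.of (Sum.inr false)) = _
    exact PresentedGroup.toGroup.of _
  · show phiZB n m hn (PresentedGroup.of (Sum.inr true)) = _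
    exact PresentedGroup.toGroup.of _

end Stmt5
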